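/- Let Ω be a symmetric positive definite m × m real matrix with induced inner product ⟨x, y⟩_Ω = xᵀΩy, let C̃ ⊆ ℝ^m be a closed convex cone, let π ∈ ℝ^m, let η̃ be the point of C̃ minimizing ⟨π − η, π − η⟩_Ω over η ∈ C̃, and let a ∈ ℝ^m. Then η̃ minimizes ⟨π − η, π − η⟩_Ω over the convex cone generated by C̃ ∪ {a} if and only if ⟨π − η̃, a⟩_Ω ≤ 0. -/

import Mathlib

open Matrix

/-- The inner product on `ℝ^m` induced by the positive definite matrix `Ω`. -/
def innOmega {m : ℕ} (Ω : Matrix (Fin m) (Fin m) ℝ) (x y : Fin m → ℝ) : ℝ :=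
  x ⬝ᵥ Ω.mulVec y

/-- The convex cone generated by a set `S ⊆ ℝ^m`: all finite nonnegative linear
combinations of elements of `S`. -/
def genCone {m : ℕ} (S : Set (Fin m → ℝ)) : Set (Fin m → ℝ) :=
  {x | ∃ (n : ℕ) (v : Fin n → Fin m → ℝ) (t : Fin n → ℝ),
    (∀ i, v i ∈ S) ∧ (∀ i, 0 ≤ t i) ∧ x = ∑ i, t i • v i}

lemma innOmega_nonneg' {m : ℕ} (Ω : Matrix (Fin m) (Fin m) ℝ) (hpos : Ω.PosDef)
    (x : Fin m → ℝ) : 0 ≤ innOmega Ω x x := by simpa [innOmega] using hpos.posSemidef.dotProduct_mulVec_nonneg x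

lemma innOmega_symm' {m : ℕ} (Ω : Matrix (Fin m) (Fin m) ℝ) (hsym : Ω.IsSymm)
    (x y : Fin m → ℝ) : innOmega Ω x y = innOmega Ω y x := by
  rw [innOmega, innOmega, dotProduct_mulVec, ← mulVec_transpose, hsym, dotProduct_comm]

lemma innOmega_expand {m : ℕ} (Ω : Matrix (Fin m) (Fin m) ℝ) (hsym : Ω.IsSymm)
    (x u : Fin m → ℝ) (t : ℝ) :
    innOmega Ω (x - t • u) (x - t • u)
      = innOmega Ω x x - 2*t*(innOmega Ω x u) + t^2 * (innOmega Ω u u) := by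
  have h := innOmega_symm' Ω hsym u x
  simp only [innOmega, mulVec_sub, mulVec_smul, sub_dotProduct, dotProduct_sub,
    smul_dotProduct, dotProduct_smul, smul_eq_mul] at *
  rw [h]; ring

lemma innOmega_sub_right {m : ℕ} (Ω : Matrix (Fin m) (Fin m) ℝ) (x y z : Fin m → ℝ) :
    innOmega Ω x (y - z) = innOmega Ω x y - innOmega Ω x z := by
  simp [innOmega, mulVec_sub, dotProduct_sub]

lemma innOmega_sum_right {m n : ℕ} (Ω : Matrix (Fin m) (Fin m) ℝ) (x : Fin m → ℝ)
    (t : Fin n → ℝ) (v : Fin n → Fin m → ℝ) :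
    innOmega Ω x (∑ i, t i • v i) = ∑ i, t i * (innOmega Ω x (v i)) := by
  simp only [innOmega]
  induction n with
  | zero => simp
  | succ k ih =>
    rw [Fin.sum_univ_succ, Fin.sum_univ_succ, mulVec_add, dotProduct_add, mulVec_smul,
      dotProduct_smul, smul_eq_mul, ih (fun i => t i.succ) (fun i => v i.succ)]

lemma small_t_lemma (A D : ℝ) (h : ∀ t : ℝ, 0 < t → t ≤ 1 → 2*t*A ≤ t^2*D) : A ≤ 0 := by
  by_contra hA
  push_neg at hA
  rcases le_or_gt D 0 with hD | hD
  · have := h 1 one_pos le_rfl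
    nlinarith
  · have ht0 : (0:ℝ) < min 1 (A/D) := lt_min one_pos (div_pos hA hD)
    have := h (min 1 (A/D)) ht0 (min_le_left _ _)
    have h2 : min 1 (A/D) * D ≤ A := by
      have : min 1 (A/D) ≤ A/D := min_le_right _ _
      calc min 1 (A/D) * D ≤ (A/D) * D := by nlinarith
        _ = A := by field_simp
    nlinarith

/-- let `η` be the `Ω`-projection of `π` onto the closed convex cone `C`.
Then `η` minimizes the `Ω`-distance squared from `π` over the convex cone generated by
`C ∪ {a}` iff `⟨π − η, a⟩_Ω ≤ 0`. -/
theorem pricing_criterion {m : ℕ}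
    (Ω : Matrix (Fin m) (Fin m) ℝ) (hsym : Ω.IsSymm) (hpos : Ω.PosDef)
    (C : Set (Fin m → ℝ)) (hclosed : IsClosed C) (hconv : Convex ℝ C)
    (hcone : ∀ x ∈ C, ∀ t : ℝ, 0 ≤ t → t • x ∈ C)
    (π η : Fin m → ℝ) (hη : η ∈ C)
    (hmin : ∀ c ∈ C, innOmega Ω (π - η) (π - η) ≤ innOmega Ω (π - c) (π - c))
    (a : Fin m → ℝ) :
    (∀ x ∈ genCone (C ∪ {a}), innOmega Ω (π - η) (π - η) ≤ innOmega Ω (π - x) (π - x)) ↔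
      innOmega Ω (π - η) a ≤ 0 := by
  set r := π - η with hr
  -- obtuse angle criterion on C
  have hobtuse : ∀ c ∈ C, innOmega Ω r (c - η) ≤ 0 := by
    intro c hc
    apply small_t_lemma _ (innOmega Ω (c - η) (c - η))
    intro t ht0 ht1
    have hmem : η + t • (c - η) ∈ C := by
      have := hconv hη hc (a := 1 - t) (b := t) (by linarith) (le_of_lt ht0) (by ring)
      convert this using 1
      simp only [smul_sub, sub_smul, one_smul]
      abel
    have := hmin _ hmem
    have hexp : π - (η + t • (c - η)) = r - t • (c - η) := by rw [hr]; abel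
    rw [hexp, innOmega_expand Ω hsym] at this
    linarith
  have hη0 : innOmega Ω r η = 0 := by
    have h1 : innOmega Ω r ((2:ℝ) • η - η) ≤ 0 := hobtuse _ (hcone η hη 2 (by norm_num))
    have h2 : innOmega Ω r ((0:ℝ) • η - η) ≤ 0 := hobtuse _ (hcone η hη 0 le_rfl)
    have e1 : (2:ℝ) • η - η = η := by rw [two_smul]; abel
    have e2 : (0:ℝ) • η - η = -η := by simp
    rw [e1] at h1
    rw [e2] at h2
    have : innOmega Ω r (-η) = - innOmega Ω r η := by
      have := innOmega_sub_right Ω r 0 η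
      simpa [innOmega, mulVec_zero, dotProduct_zero] using this
    rw [this] at h2
    linarith
  have hneg : ∀ c ∈ C, innOmega Ω r c ≤ 0 := by
    intro c hc
    have := hobtuse c hc
    rw [innOmega_sub_right, hη0] at this
    linarith
  constructor
  · intro H
    apply small_t_lemma _ (innOmega Ω a a)
    intro t ht0 ht1
    have hmem : η + t • a ∈ genCone (C ∪ {a}) := by
      refine ⟨2, ![η, a], ![1, t], ?_, ?_, ?_⟩
      · intro i; fin_cases i
        · exact Or.inl hη
        · exact Or.inr rfl
      · intro i; fin_cases i
        · norm_num
        · exact le_of_lt ht0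
      · rw [Fin.sum_univ_two]; simp
    have := H _ hmem
    have hexp : π - (η + t • a) = r - t • a := by rw [hr]; abel
    rw [hexp, innOmega_expand Ω hsym] at this
    linarith
  · intro ha x hx
    obtain ⟨n, v, t, hvS, ht, hxe⟩ := hx
    have hxneg : innOmega Ω r x ≤ 0 := by
      rw [hxe, innOmega_sum_right]
      apply Finset.sum_nonpos
      intro i _
      rcases hvS i with hvC | hva
      · exact mul_nonpos_of_nonneg_of_nonpos (ht i) (hneg _ hvC)
      · rw [Set.mem_singleton_iff] at hva
        rw [hva]
        exact mul_nonpos_of_nonneg_of_nonpos (ht i) ha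
    have hexp : π - x = r - (1:ℝ) • (x - η) := by rw [hr, one_smul]; abel
    rw [hexp, innOmega_expand Ω hsym]
    have h1 : innOmega Ω r (x - η) ≤ 0 := by
      rw [innOmega_sub_right, hη0]; linarith
    have h2 : 0 ≤ innOmega Ω (x - η) (x - η) := innOmega_nonneg' Ω hpos _
    nlinarith
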